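/- Let G = ℤ/2 act on the quaternion algebra ℍ by conjugation by i, i.e. the generator τ acts by τ(q) = i·q·i⁻¹. Then the twisted group ring ℍ⋊G is isomorphic as an ℝ-algebra to the algebra M₂(ℂ) of 2×2 complex matrices. -/

import Mathlib

set_option linter.unusedSectionVars false

noncomputable section

namespace Paper

variable (A : Type*) [Ring A] (G : Type*) [Group G] [MulSemiringAction G A]

/-- The twisted group ring (crossed product) `A⋊G`: the free left `A`-module with basis `G`,
with multiplication determined by `(a·g)(b·h) = (a * g(b))·(gh)`. -/
def CrossedProduct : Type _ := G →₀ A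

namespace CrossedProduct

instance : AddCommGroup (CrossedProduct A G) := inferInstanceAs (AddCommGroup (G →₀ A))

instance {k : Type*} [Semiring k] [Module k A] : Module k (CrossedProduct A G) :=
  inferInstanceAs (Module k (G →₀ A))

variable {A G}

/-- The element `a·g` of the crossed product. -/
def single (g : G) (a : A) : CrossedProduct A G := Finsupp.single g a

theorem single_add (g : G) (a b : A) :
    (single g (a + b) : CrossedProduct A G) = single g a + single g b :=
  Finsupp.single_add g a b

theorem single_zero (g : G) : (single g 0 : CrossedProduct A G) = 0 :=
  Finsupp.single_zero g

theorem induction_linear {p : CrossedProduct A G → Prop} (f : CrossedProduct A G)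
    (h0 : p 0) (hadd : ∀ f g, p f → p g → p (f + g)) (hsingle : ∀ (g : G) (a : A), p (single g a)) :
    p f :=
  Finsupp.induction_linear f h0 hadd hsingle

noncomputable instance : Mul (CrossedProduct A G) :=
  ⟨fun f h => Finsupp.sum (f : G →₀ A) fun g a =>
    Finsupp.sum (h : G →₀ A) fun g' b => Finsupp.single (g * g') (a * g • b)⟩

theorem mul_def (f h : CrossedProduct A G) :
    f * h = Finsupp.sum (f : G →₀ A) fun g a =>
      Finsupp.sum (h : G →₀ A) fun g' b =>
        (single (g * g') (a * g • b) : CrossedProduct A G) := rfl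

noncomputable instance : One (CrossedProduct A G) := ⟨single 1 1⟩

theorem one_def : (1 : CrossedProduct A G) = single 1 1 := rfl

private theorem mul_zero' (f : CrossedProduct A G) : f * 0 = 0 := by
  rw [mul_def]
  exact Finset.sum_eq_zero fun _ _ => rfl

private theorem zero_mul' (f : CrossedProduct A G) : 0 * f = 0 :=
  Finsupp.sum_zero_index

private theorem mul_add' (f h k : CrossedProduct A G) : f * (h + k) = f * h + f * k := by
  simp only [mul_def, single]
  erw [← Finsupp.sum_add]
  refine Finsupp.sum_congr fun g _ => ?_
  erw [Finsupp.sum_add_index' (fun g' => by simp [-Finsupp.single_mul]; rfl) (fun g' b c => by simp [mul_add, smul_add, Finsupp.single_add, -Finsupp.single_mul]; rfl)]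

private theorem add_mul' (f h k : CrossedProduct A G) : (f + h) * k = f * k + h * k := by
  simp only [mul_def, single]
  erw [Finsupp.sum_add_index' (fun g => by simp [-Finsupp.single_mul]; unfold Finsupp.sum; simp; exact Finset.sum_const_zero) (fun g a b => ?_)]
  erw [← Finsupp.sum_add]
  refine Finsupp.sum_congr fun g' _ => ?_
  simp [add_mul, Finsupp.single_add, -Finsupp.single_mul]; rfl

theorem single_mul_single (g g' : G) (a b : A) :
    (single g a * single g' b : CrossedProduct A G) = single (g * g') (a * g • b) := by
  rw [mul_def]; simp only [single]
  erw [Finsupp.sum_single_index, Finsupp.sum_single_index]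
  · simp; rfl
  · exact Finset.sum_eq_zero fun _ _ => by simp; rfl

private theorem one_mul' (f : CrossedProduct A G) : 1 * f = f := by
  induction f using induction_linear with
  | h0 => exact mul_zero' 1
  | hadd f g hf hg => rw [mul_add', hf, hg]
  | hsingle g a => rw [one_def, single_mul_single, one_mul, one_smul, one_mul]

private theorem mul_one' (f : CrossedProduct A G) : f * 1 = f := by
  induction f using induction_linear with
  | h0 => exact zero_mul' 1
  | hadd f g hf hg => rw [add_mul', hf, hg]
  | hsingle g a => rw [one_def, single_mul_single, mul_one, smul_one, mul_one]

private theorem mul_assoc' (f h k : CrossedProduct A G) : f * h * k = f * (h * k) := by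
  induction f using induction_linear with
  | h0 => rw [zero_mul', zero_mul', zero_mul']
  | hadd f₁ f₂ h₁ h₂ => rw [add_mul', add_mul', add_mul', h₁, h₂]
  | hsingle g a =>
    induction h using induction_linear with
    | h0 => rw [mul_zero', zero_mul', mul_zero']
    | hadd h₁ h₂ ih₁ ih₂ => rw [mul_add', add_mul', ih₁, ih₂, add_mul', mul_add']
    | hsingle g' b =>
      induction k using induction_linear with
      | h0 => rw [mul_zero', mul_zero', mul_zero']
      | hadd k₁ k₂ ih₁ ih₂ => rw [mul_add', ih₁, ih₂, mul_add', mul_add']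
      | hsingle g'' c =>
        rw [single_mul_single, single_mul_single, single_mul_single, single_mul_single,
          mul_assoc, mul_smul, smul_mul', mul_assoc]

noncomputable instance : Ring (CrossedProduct A G) :=
  { (inferInstance : AddCommGroup (CrossedProduct A G)),
    (inferInstance : Mul (CrossedProduct A G)),
    (inferInstance : One (CrossedProduct A G)) with
    left_distrib := mul_add'
    right_distrib := add_mul'
    zero_mul := zero_mul'
    mul_zero := mul_zero'
    mul_assoc := mul_assoc'
    one_mul := one_mul'
    mul_one := mul_one' }

/-- The canonical inclusion of `A` into the crossed product `A⋊G`. -/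
noncomputable def ι : A →+* CrossedProduct A G where
  toFun a := single 1 a
  map_one' := rfl
  map_mul' a b := by rw [single_mul_single, one_mul, one_smul]
  map_zero' := single_zero 1
  map_add' a b := single_add 1 a b

end CrossedProduct

end Paper

end

/-- The quaternion `i`. -/
noncomputable def quatI : Quaternion ℝ := ⟨0, 1, 0, 0⟩

section Aux

open Paper Paper.CrossedProduct Multiplicative
attribute [local simp] Quaternion.re_zero Quaternion.imI_zero Quaternion.imJ_zero Quaternion.imK_zero Quaternion.re_one Quaternion.imI_one Quaternion.imJ_one Quaternion.imK_one

local notation "G2" => Multiplicative (ZMod 2)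
local notation "ℍ" => Quaternion ℝ

variable [MulSemiringAction (Multiplicative (ZMod 2)) (Quaternion ℝ)]

private noncomputable def gg : G2 := Multiplicative.ofAdd 1

private lemma quatI_inv : quatI⁻¹ = -quatI :=
  inv_eq_of_mul_eq_one_right (by ext <;> simp [show quatI.re = 0 from rfl, show quatI.imI = 1 from rfl, show quatI.imJ = 0 from rfl, show quatI.imK = 0 from rfl])

private lemma conjI (q : ℍ) : quatI * q * quatI⁻¹ = ⟨q.re, q.imI, -q.imJ, -q.imK⟩ := by
  rw [quatI_inv]; ext <;> simp [show quatI.re = 0 from rfl, show quatI.imI = 1 from rfl, show quatI.imJ = 0 from rfl, show quatI.imK = 0 from rfl] <;> ring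

/-- The matrix `φ(a) + φ(b)·U` where `φ : ℍ → M₂(ℂ)` is the standard embedding and
`U = diag(-1, 1)`. -/
private noncomputable def mk2 (a b : ℍ) : Matrix (Fin 2) (Fin 2) ℂ :=
  !![⟨a.re - b.re, a.imI - b.imI⟩, ⟨a.imJ + b.imJ, a.imK + b.imK⟩;
     ⟨-a.imJ + b.imJ, a.imK - b.imK⟩, ⟨a.re + b.re, -(a.imI + b.imI)⟩]

private lemma mk2_add (a a' b b' : ℍ) : mk2 (a + a') (b + b') = mk2 a b + mk2 a' b' := by
  ext i j
  fin_cases i <;> fin_cases j <;>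
    simp [mk2, Complex.ext_iff] <;> constructor <;> ring

private lemma mk2_smul (r : ℝ) (a b : ℍ) : mk2 (r • a) (r • b) = r • mk2 a b := by
  ext i j
  fin_cases i <;> fin_cases j <;>
    simp [mk2, Complex.ext_iff] <;> constructor <;> ring

private lemma key00 (a b : ℍ) : mk2 (a * b) 0 = mk2 a 0 * mk2 b 0 := by
  rw [show mk2 a 0 * mk2 b 0 = _ from Matrix.mul_fin_two _ _ _ _ _ _ _ _]
  ext i j
  fin_cases i <;> fin_cases j <;>
    simp [mk2, Complex.ext_iff, Quaternion.re_mul, Quaternion.imI_mul,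
      Quaternion.imJ_mul, Quaternion.imK_mul] <;> constructor <;> ring

private lemma key01 (a b : ℍ) : mk2 0 (a * b) = mk2 a 0 * mk2 0 b := by
  rw [show mk2 a 0 * mk2 0 b = _ from Matrix.mul_fin_two _ _ _ _ _ _ _ _]
  ext i j
  fin_cases i <;> fin_cases j <;>
    simp [mk2, Complex.ext_iff, Quaternion.re_mul, Quaternion.imI_mul,
      Quaternion.imJ_mul, Quaternion.imK_mul] <;> constructor <;> ring

private lemma key10 (a b : ℍ) :
    mk2 0 (a * ⟨b.re, b.imI, -b.imJ, -b.imK⟩) = mk2 0 a * mk2 b 0 := by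
  rw [show mk2 0 a * mk2 b 0 = _ from Matrix.mul_fin_two _ _ _ _ _ _ _ _]
  unfold mk2
  erw [Quaternion.re_mul, Quaternion.imI_mul, Quaternion.imJ_mul, Quaternion.imK_mul]
  ext i j
  fin_cases i <;> fin_cases j <;>
    simp [mk2, Complex.ext_iff, Quaternion.re_mul, Quaternion.imI_mul,
      Quaternion.imJ_mul, Quaternion.imK_mul] <;> constructor <;> ring

private lemma key11 (a b : ℍ) :
    mk2 (a * ⟨b.re, b.imI, -b.imJ, -b.imK⟩) 0 = mk2 0 a * mk2 0 b := by
  rw [show mk2 0 a * mk2 0 b = _ from Matrix.mul_fin_two _ _ _ _ _ _ _ _]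
  unfold mk2
  erw [Quaternion.re_mul, Quaternion.imI_mul, Quaternion.imJ_mul, Quaternion.imK_mul]
  ext i j
  fin_cases i <;> fin_cases j <;>
    simp [mk2, Complex.ext_iff, Quaternion.re_mul, Quaternion.imI_mul,
      Quaternion.imJ_mul, Quaternion.imK_mul] <;> constructor <;> ring

private lemma mk2_one : mk2 1 0 = 1 := by
  ext i j
  fin_cases i <;> fin_cases j <;> simp [mk2, Complex.ext_iff, Matrix.one_apply]

/-- the forward map -/
private def toF (f : CrossedProduct ℍ G2) : G2 →₀ ℍ := f

private noncomputable def Phi (f : CrossedProduct ℍ G2) : Matrix (Fin 2) (Fin 2) ℂ :=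
  mk2 (toF f 1) (toF f gg)

private noncomputable def qa (M : Matrix (Fin 2) (Fin 2) ℂ) : ℍ :=
  ⟨((M 0 0).re + (M 1 1).re) / 2, ((M 0 0).im - (M 1 1).im) / 2,
    ((M 0 1).re - (M 1 0).re) / 2, ((M 0 1).im + (M 1 0).im) / 2⟩

private noncomputable def qb (M : Matrix (Fin 2) (Fin 2) ℂ) : ℍ :=
  ⟨((M 1 1).re - (M 0 0).re) / 2, -((M 0 0).im + (M 1 1).im) / 2,
    ((M 0 1).re + (M 1 0).re) / 2, ((M 0 1).im - (M 1 0).im) / 2⟩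

/-- the inverse map -/
private noncomputable def Psi (M : Matrix (Fin 2) (Fin 2) ℂ) : CrossedProduct ℍ G2 :=
  single 1 (qa M) + single gg (qb M)

private lemma ev_add (f h : CrossedProduct ℍ G2) (g : G2) :
    toF (f + h) g = toF f g + toF h g := rfl

private lemma ev_smul (r : ℝ) (f : CrossedProduct ℍ G2) (g : G2) :
    toF (r • f) g = r • toF f g := rfl

private lemma ev_zero (g : G2) : toF 0 g = 0 := rfl

private lemma one_ne_gg : (1 : G2) ≠ gg := by decide

private lemma ev_single_self (g : G2) (a : ℍ) :
    toF (single g a) g = a := Finsupp.single_eq_same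

private lemma ev_single_ne (g g' : G2) (h : g ≠ g') (a : ℍ) :
    toF (single g a) g' = 0 := Finsupp.single_eq_of_ne' h

private lemma Phi_single_one (a : ℍ) : Phi (single 1 a) = mk2 a 0 := by
  rw [Phi, ev_single_self, ev_single_ne _ _ one_ne_gg]

private lemma Phi_single_gg (a : ℍ) : Phi (single gg a) = mk2 0 a := by
  rw [Phi, ev_single_self, ev_single_ne _ _ one_ne_gg.symm]

private lemma Phi_add (f h : CrossedProduct ℍ G2) : Phi (f + h) = Phi f + Phi h := by
  rw [Phi, Phi, Phi, ev_add, ev_add, mk2_add]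

private lemma Phi_zero : Phi (0 : CrossedProduct ℍ G2) = 0 := by
  have : (0 : CrossedProduct ℍ G2) = single 1 (0 : ℍ) := (single_zero 1).symm
  rw [this, Phi_single_one]
  ext i j
  fin_cases i <;> fin_cases j <;> simp [mk2, Complex.ext_iff]

private lemma gcases (g : Multiplicative (ZMod 2)) : g = 1 ∨ g = gg := by
  revert g; decide

private lemma gg_mul_gg : gg * gg = (1 : Multiplicative (ZMod 2)) := by decide

private lemma gg_smul (hact : ∀ q : Quaternion ℝ,
      (Multiplicative.ofAdd (1 : ZMod 2)) • q = quatI * q * quatI⁻¹) (b : ℍ) :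
    gg • b = (⟨b.re, b.imI, -b.imJ, -b.imK⟩ : ℍ) := by
  rw [show gg • b = quatI * b * quatI⁻¹ from hact b, conjI]

private lemma Phi_mul (hact : ∀ q : Quaternion ℝ,
      (Multiplicative.ofAdd (1 : ZMod 2)) • q = quatI * q * quatI⁻¹)
    (f h : CrossedProduct ℍ G2) : Phi (f * h) = Phi f * Phi h := by
  induction f using induction_linear with
  | h0 => rw [zero_mul, Phi_zero, zero_mul]
  | hadd f1 f2 ih1 ih2 => rw [add_mul, Phi_add, Phi_add, ih1, ih2, add_mul]
  | hsingle g a =>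
    induction h using induction_linear with
    | h0 => rw [mul_zero, Phi_zero, mul_zero]
    | hadd h1 h2 ih1 ih2 => rw [mul_add, Phi_add, Phi_add, ih1, ih2, mul_add]
    | hsingle g' b =>
      rw [single_mul_single]
      rcases gcases g with rfl | rfl <;> rcases gcases g' with rfl | rfl
      · rw [one_mul, one_smul, Phi_single_one, Phi_single_one, Phi_single_one, key00]
      · rw [one_mul, one_smul, Phi_single_gg, Phi_single_one, Phi_single_gg, key01]
      · rw [mul_one, gg_smul hact, Phi_single_gg, Phi_single_gg, Phi_single_one, key10]
      · rw [gg_mul_gg, gg_smul hact, Phi_single_one, Phi_single_gg, Phi_single_gg, key11]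

private lemma qa_mk2 (a b : ℍ) : qa (mk2 a b) = a := by
  ext <;> simp [qa, mk2] <;> ring

private lemma qb_mk2 (a b : ℍ) : qb (mk2 a b) = b := by
  ext <;> simp [qb, mk2] <;> ring

private lemma decomp (f : CrossedProduct ℍ G2) :
    single 1 (toF f 1) + single gg (toF f gg) = f := by
  have key : toF (single 1 (toF f 1) + single gg (toF f gg)) = toF f := by
    apply Finsupp.ext
    intro g
    rcases gcases g with rfl | rfl
    · rw [ev_add, ev_single_self, ev_single_ne _ _ one_ne_gg.symm, add_zero]
    · rw [ev_add, ev_single_self, ev_single_ne _ _ one_ne_gg, zero_add]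
  exact key

private lemma Psi_Phi (f : CrossedProduct ℍ G2) : Psi (Phi f) = f := by
  show single 1 (qa (mk2 (toF f 1) (toF f gg))) + single gg (qb (mk2 (toF f 1) (toF f gg))) = f
  rw [qa_mk2, qb_mk2, decomp]

private lemma mk2_qaqb (M : Matrix (Fin 2) (Fin 2) ℂ) : mk2 (qa M) (qb M) = M := by
  ext i j
  fin_cases i <;> fin_cases j <;>
    (apply Complex.ext <;> simp [mk2, qa, qb] <;> ring)

private lemma Phi_Psi (M : Matrix (Fin 2) (Fin 2) ℂ) : Phi (Psi M) = M := by
  show Phi (single 1 (qa M) + single gg (qb M)) = M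
  rw [Phi_add, Phi_single_one, Phi_single_gg, ← mk2_add, add_zero, zero_add, mk2_qaqb]


end Aux

open Paper in
/-- Let `G = ℤ/2` act on the quaternion algebra `ℍ` by conjugation by `i`,
i.e. the generator acts by `q ↦ i·q·i⁻¹`.  Then the twisted group ring `ℍ⋊G` is isomorphic,
as an `ℝ`-algebra, to `M₂(ℂ)`. -/
theorem crossedProduct_quaternion_conjByI_iso_matrix
    [MulSemiringAction (Multiplicative (ZMod 2)) (Quaternion ℝ)]
    (hact : ∀ q : Quaternion ℝ,
      (Multiplicative.ofAdd (1 : ZMod 2)) • q = quatI * q * quatI⁻¹) :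
    ∃ e : CrossedProduct (Quaternion ℝ) (Multiplicative (ZMod 2)) ≃+*
        Matrix (Fin 2) (Fin 2) ℂ,
      ∀ (r : ℝ) (f : CrossedProduct (Quaternion ℝ) (Multiplicative (ZMod 2))),
        e (r • f) = r • e f := by
  refine ⟨{ toFun := Phi
            invFun := Psi
            left_inv := Psi_Phi
            right_inv := Phi_Psi
            map_mul' := Phi_mul hact
            map_add' := Phi_add }, fun r f => ?_⟩
  show Phi (r • f) = r • Phi f
  rw [Phi, Phi, ev_smul, ev_smul, mk2_smul]
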